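/- arXiv:2604.18325 — 2 statements merged into one kernel-verified Lean document; each statement's English description precedes it below -/
import Mathlib

section
/- Let {a_k} be a nonnegative real sequence and ξ > 0. Then for every k ≥ 1, ∑_{j=1}^{k} a_j / (ξ + ∑_{i=1}^{j} a_i) ≤ log(1 + (1/ξ) ∑_{j=1}^{k} a_j). -/
theorem stmt_9 (a : ℕ → ℝ) (ha : ∀ j, 0 ≤ a j) (ξ : ℝ) (hξ : 0 < ξ)
    (k : ℕ) (hk : 1 ≤ k) :
    ∑ j ∈ Finset.Icc 1 k, a j / (ξ + ∑ i ∈ Finset.Icc 1 j, a i)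
      ≤ Real.log (1 + (1 / ξ) * ∑ j ∈ Finset.Icc 1 k, a j) := by
  set S : ℕ → ℝ := fun j => ξ + ∑ i ∈ Finset.Icc 1 j, a i with hS
  have hSpos : ∀ j, 0 < S j := by
    intro j
    have : 0 ≤ ∑ i ∈ Finset.Icc 1 j, a i := Finset.sum_nonneg fun i _ => ha i
    simp only [hS]; linarith
  have hS0 : S 0 = ξ := by simp [hS]
  have hstep : ∀ n : ℕ, S (n + 1) = S n + a (n + 1) := by
    intro n
    simp only [hS]
    rw [Finset.sum_Icc_succ_top (Nat.one_le_iff_ne_zero.mpr (Nat.succ_ne_zero n))]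
    ring
  have key : ∀ n : ℕ, ∑ j ∈ Finset.Icc 1 n, a j / S j ≤ Real.log (S n) - Real.log (S 0) := by
    intro n
    induction n with
    | zero => simp
    | succ m ih =>
      rw [Finset.sum_Icc_succ_top (Nat.one_le_iff_ne_zero.mpr (Nat.succ_ne_zero m))]
      have h1 : a (m + 1) / S (m + 1) ≤ Real.log (S (m + 1)) - Real.log (S m) := by
        have hxy : Real.log (S m / S (m + 1)) ≤ S m / S (m + 1) - 1 :=
          Real.log_le_sub_one_of_pos (div_pos (hSpos m) (hSpos (m + 1)))
        rw [Real.log_div (ne_of_gt (hSpos m)) (ne_of_gt (hSpos (m + 1)))] at hxy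
        have : S m / S (m + 1) - 1 = -(a (m + 1) / S (m + 1)) := by
          field_simp [ne_of_gt (hSpos (m + 1))]
          rw [hstep m]; ring
        linarith [hxy, this ▸ hxy]
      linarith
  have heq : Real.log (1 + (1 / ξ) * ∑ j ∈ Finset.Icc 1 k, a j)
      = Real.log (S k) - Real.log (S 0) := by
    rw [hS0]
    have : 1 + (1 / ξ) * ∑ j ∈ Finset.Icc 1 k, a j = S k / ξ := by
      simp only [hS]; field_simp
    rw [this, Real.log_div (ne_of_gt (hSpos k)) (ne_of_gt hξ)]
  rw [heq]
  exact key k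
end

section
/- Let p ∈ (0,1], κ > 0, σ > 0, m ∈ ℕ, and suppose φ̃_μ : ℝ → ℝ satisfies φ̃_μ(t) ≥ σμ and |φ̃_{μ₁}(t) − φ̃_{μ₂}(t)| ≤ κ|μ₁ − μ₂| for all t ∈ ℝ and all μ, μ₁, μ₂ > 0. Then for any t ∈ ℝ and any 0 < μ₂ ≤ μ₁ ≤ 1, |(φ̃_{μ₁}(t))^p − (φ̃_{μ₂}(t))^p| ≤ κ σ^{p−1} (μ₁/μ₂)^{1−p} (μ₁^p − μ₂^p). -/
private lemma bern (u p : ℝ) (hu : 0 ≤ u) (hp0 : 0 ≤ p) (hp1 : p ≤ 1) :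
    u ^ p ≤ 1 + p * (u - 1) := by
  have h := rpow_one_add_le_one_add_mul_self (s := u - 1) (by linarith) hp0 hp1
  simpa using h

private lemma sub_rpow_le (x y p : ℝ) (hy : 0 < y) (hyx : y ≤ x) (hp0 : 0 < p)
    (hp1 : p ≤ 1) : x ^ p - y ^ p ≤ p * y ^ (p - 1) * (x - y) := by
  have hx : 0 < x := hy.trans_le hyx
  have hyp : (0:ℝ) < y ^ p := Real.rpow_pos_of_pos hy p
  have h1 : (x / y) ^ p ≤ 1 + p * (x / y - 1) :=
    bern _ _ (by positivity) hp0.le hp1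
  rw [Real.div_rpow hx.le hy.le, div_le_iff₀ hyp] at h1
  have h3 : y ^ (p - 1) = y ^ p / y := by
    rw [Real.rpow_sub hy, Real.rpow_one]
  rw [h3]
  have key : (1 + p * (x / y - 1)) * y ^ p = y ^ p + p * (y ^ p / y) * (x - y) := by
    field_simp
  rw [key] at h1
  linarith

private lemma le_sub_rpow (x y p : ℝ) (hy : 0 < y) (hyx : y ≤ x) (hp0 : 0 < p)
    (hp1 : p ≤ 1) : p * x ^ (p - 1) * (x - y) ≤ x ^ p - y ^ p := by
  have hx : 0 < x := hy.trans_le hyx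
  have hxp : (0:ℝ) < x ^ p := Real.rpow_pos_of_pos hx p
  have h1 : (y / x) ^ p ≤ 1 + p * (y / x - 1) :=
    bern _ _ (by positivity) hp0.le hp1
  rw [Real.div_rpow hy.le hx.le, div_le_iff₀ hxp] at h1
  have h3 : x ^ (p - 1) = x ^ p / x := by
    rw [Real.rpow_sub hx, Real.rpow_one]
  rw [h3]
  have key : (1 + p * (y / x - 1)) * x ^ p = x ^ p - p * (x ^ p / x) * (x - y) := by
    field_simp
    ring
  rw [key] at h1
  linarith

theorem stmt_14 (p κ σ : ℝ) (hp0 : 0 < p) (hp1 : p ≤ 1) (hκ : 0 < κ) (hσ : 0 < σ)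
    (φ : ℝ → ℝ → ℝ)
    (hlb : ∀ μ : ℝ, 0 < μ → ∀ t : ℝ, φ μ t ≥ σ * μ)
    (hlip : ∀ μ₁ μ₂ : ℝ, 0 < μ₁ → 0 < μ₂ → ∀ t : ℝ,
        |φ μ₁ t - φ μ₂ t| ≤ κ * |μ₁ - μ₂|)
    (t μ₁ μ₂ : ℝ) (h2 : 0 < μ₂) (h21 : μ₂ ≤ μ₁) (h1 : μ₁ ≤ 1) :
    |(φ μ₁ t) ^ p - (φ μ₂ t) ^ p|
      ≤ κ * σ ^ (p - 1) * (μ₁ / μ₂) ^ (1 - p) * (μ₁ ^ p - μ₂ ^ p) := by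
  have h1' : 0 < μ₁ := h2.trans_le h21
  set a := φ μ₁ t with ha_def
  set b := φ μ₂ t with hb_def
  have ha : σ * μ₂ ≤ a := le_trans (by nlinarith) (hlb μ₁ h1' t)
  have hb : σ * μ₂ ≤ b := hlb μ₂ h2 t
  have hc : 0 < σ * μ₂ := by positivity
  have hcp : (0:ℝ) ≤ (σ * μ₂) ^ (p - 1) := (Real.rpow_pos_of_pos hc _).le
  have hab : |a - b| ≤ κ * (μ₁ - μ₂) := by
    have h := hlip μ₁ μ₂ h1' h2 t
    rwa [abs_of_nonneg (sub_nonneg.mpr h21)] at h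
  -- key pointwise bound
  have key : |a ^ p - b ^ p| ≤ p * (σ * μ₂) ^ (p - 1) * |a - b| := by
    rcases le_total b a with hba | hba
    · have hbc : (σ * μ₂) ^ (p-1) ≥ b ^ (p-1) :=
        Real.rpow_le_rpow_of_nonpos hc hb (by linarith)
      have h4 := sub_rpow_le a b p (hc.trans_le hb) hba hp0 hp1
      have habs : |a ^ p - b ^ p| = a ^ p - b ^ p := abs_of_nonneg
        (by linarith [Real.rpow_le_rpow (hc.trans_le hb).le hba hp0.le])
      have h9 : b ^ (p-1) * (a-b) ≤ (σ * μ₂) ^ (p-1) * (a-b) :=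
        mul_le_mul_of_nonneg_right hbc (sub_nonneg.mpr hba)
      have h10 := mul_le_mul_of_nonneg_left h9 hp0.le
      rw [habs, abs_of_nonneg (sub_nonneg.mpr hba)]
      nlinarith [h10, h4]
    · have hbc : (σ * μ₂) ^ (p-1) ≥ a ^ (p-1) :=
        Real.rpow_le_rpow_of_nonpos hc ha (by linarith)
      have h4 := sub_rpow_le b a p (hc.trans_le ha) hba hp0 hp1
      have habs : |a ^ p - b ^ p| = b ^ p - a ^ p := by
        rw [abs_sub_comm]
        exact abs_of_nonneg
          (by linarith [Real.rpow_le_rpow (hc.trans_le ha).le hba hp0.le])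
      have h9 : a ^ (p-1) * (b-a) ≤ (σ * μ₂) ^ (p-1) * (b-a) :=
        mul_le_mul_of_nonneg_right hbc (sub_nonneg.mpr hba)
      have h10 := mul_le_mul_of_nonneg_left h9 hp0.le
      rw [habs, abs_sub_comm, abs_of_nonneg (sub_nonneg.mpr hba)]
      nlinarith [h10, h4]
  -- mu bound
  have hmu : μ₁ - μ₂ ≤ μ₁ ^ (1 - p) * (μ₁ ^ p - μ₂ ^ p) / p := by
    have h5 := le_sub_rpow μ₁ μ₂ p h2 h21 hp0 hp1
    have h6 : μ₁ ^ (p - 1) * μ₁ ^ (1 - p) = 1 := by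
      rw [← Real.rpow_add h1']
      norm_num
    have h7 : (0:ℝ) < μ₁ ^ (1 - p) := Real.rpow_pos_of_pos h1' _
    rw [le_div_iff₀ hp0]
    have h9 := mul_le_mul_of_nonneg_right h5 h7.le
    have h10 : p * μ₁ ^ (p-1) * (μ₁ - μ₂) * μ₁ ^ (1-p) = p * (μ₁ - μ₂) := by
      calc p * μ₁ ^ (p-1) * (μ₁ - μ₂) * μ₁ ^ (1-p)
          = p * (μ₁ - μ₂) * (μ₁ ^ (p-1) * μ₁ ^ (1-p)) := by ring
        _ = p * (μ₁ - μ₂) := by rw [h6, mul_one]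
    rw [h10] at h9
    linarith
  -- put everything together
  have habp : |a ^ p - b ^ p| ≤ p * (σ * μ₂) ^ (p - 1) * (κ * (μ₁ ^ (1 - p) * (μ₁ ^ p - μ₂ ^ p) / p)) := by
    calc |a ^ p - b ^ p| ≤ p * (σ * μ₂) ^ (p - 1) * |a - b| := key
      _ ≤ p * (σ * μ₂) ^ (p - 1) * (κ * (μ₁ - μ₂)) := by
          apply mul_le_mul_of_nonneg_left hab (by positivity)
      _ ≤ p * (σ * μ₂) ^ (p - 1) * (κ * (μ₁ ^ (1 - p) * (μ₁ ^ p - μ₂ ^ p) / p)) := by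
          apply mul_le_mul_of_nonneg_left _ (by positivity)
          exact mul_le_mul_of_nonneg_left hmu hκ.le
  have e1 : (σ * μ₂) ^ (p - 1) = σ ^ (p - 1) * (μ₂ ^ (1 - p))⁻¹ := by
    rw [Real.mul_rpow hσ.le h2.le]
    congr 1
    rw [show p - 1 = -(1 - p) by ring, Real.rpow_neg h2.le]
  have e2 : (μ₁ / μ₂) ^ (1 - p) = μ₁ ^ (1 - p) / μ₂ ^ (1 - p) :=
    Real.div_rpow h1'.le h2.le _
  have h8 : (0:ℝ) < μ₂ ^ (1 - p) := Real.rpow_pos_of_pos h2 _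
  have e3 : p * (σ * μ₂) ^ (p - 1) * (κ * (μ₁ ^ (1 - p) * (μ₁ ^ p - μ₂ ^ p) / p))
      = κ * σ ^ (p - 1) * (μ₁ / μ₂) ^ (1 - p) * (μ₁ ^ p - μ₂ ^ p) := by
    rw [e1, e2]
    field_simp
  rw [e3] at habp
  exact habp
end
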